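/- Let a be an L^0-linear homogeneous-of-type-one projection in L⁺(D_i : i ∈ I). Then there exist a partition (π_i)_{i∈I} of the unit in ∇ and unit vectors φ_i ∈ D_i such that a = (o)-∑_{i∈I} π_i (φ_i ⊗ φ_i). -/

import Mathlib

open MeasureTheory

namespace KHPaper

variable {Ω : Type} [MeasurableSpace Ω] {μ : Measure Ω}

/-- `L⁰(Ω)`: measurable complex functions modulo a.e. equality. -/
abbrev L0 (Ω : Type) [MeasurableSpace Ω] (μ : Measure Ω) := Ω →ₘ[μ] ℂ
/-- real-valued `L⁰`. -/
abbrev L0R (Ω : Type) [MeasurableSpace Ω] (μ : Measure Ω) := Ω →ₘ[μ] ℝ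

noncomputable instance : CommRing (L0 Ω μ) :=
  { (inferInstance : AddCommGroup (L0 Ω μ)),
    (inferInstance : CommMonoid (L0 Ω μ)) with
    left_distrib := by
      intro a b c
      apply AEEqFun.ext
      filter_upwards [AEEqFun.coeFn_mul a (b + c), AEEqFun.coeFn_add b c,
        AEEqFun.coeFn_mul a b, AEEqFun.coeFn_mul a c,
        AEEqFun.coeFn_add (a * b) (a * c)] with x h1 h2 h3 h4 h5
      simp only [h1, h5, Pi.mul_apply, Pi.add_apply, h2, h3, h4, mul_add]
    right_distrib := by
      intro a b c
      apply AEEqFun.ext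
      filter_upwards [AEEqFun.coeFn_mul (a + b) c, AEEqFun.coeFn_add a b,
        AEEqFun.coeFn_mul a c, AEEqFun.coeFn_mul b c,
        AEEqFun.coeFn_add (a * c) (b * c)] with x h1 h2 h3 h4 h5
      simp only [h1, h5, Pi.mul_apply, Pi.add_apply, h2, h3, h4, add_mul]
    zero_mul := by
      intro a
      apply AEEqFun.ext
      filter_upwards [AEEqFun.coeFn_mul 0 a, AEEqFun.coeFn_zero (β := ℂ) (μ := μ)] with x h1 h2
      simp [h1, h2]
    mul_zero := by
      intro a
      apply AEEqFun.ext
      filter_upwards [AEEqFun.coeFn_mul a 0, AEEqFun.coeFn_zero (β := ℂ) (μ := μ)] with x h1 h2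
      simp [h1, h2] }

/-- pointwise absolute value `L⁰ → L⁰ℝ`. -/
noncomputable def absL (f : L0 Ω μ) : L0R Ω μ := f.comp (fun z : ℂ => ‖z‖) continuous_norm
/-- pointwise real part. -/
noncomputable def reL (f : L0 Ω μ) : L0R Ω μ := f.comp Complex.re Complex.continuous_re
/-- pointwise complex conjugation. -/
noncomputable def conjL (f : L0 Ω μ) : L0 Ω μ :=
  f.comp (starRingEnd ℂ) (by continuity)
/-- embedding of real `L⁰` into complex `L⁰`. -/
noncomputable def ofRealL (f : L0R Ω μ) : L0 Ω μ := f.comp Complex.ofReal Complex.continuous_ofReal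
/-- pointwise square root on real `L⁰`. -/
noncomputable def sqrtL (f : L0R Ω μ) : L0R Ω μ := f.comp Real.sqrt Real.continuous_sqrt
/-- constants. -/
noncomputable def constL (Ω : Type) [MeasurableSpace Ω] (μ : Measure Ω) (c : ℂ) : L0 Ω μ :=
  AEEqFun.const Ω c

/-- idempotents of `L⁰` (the Boolean algebra `∇`). -/
def IsIdem (π : L0 Ω μ) : Prop := π * π = π

/-- A family of idempotents is a partition of the unit in `∇`. -/
def IsPartition {ι : Type*} (π : ι → L0 Ω μ) : Prop :=
  (∀ i, IsIdem (π i)) ∧ (∀ i j, i ≠ j → π i * π j = 0) ∧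
    (∀ e : L0 Ω μ, IsIdem e → (∀ i, π i * e = 0) → e = 0)

/-- a decreasing net of nonnegative elements of `L⁰ℝ` has infimum zero. -/
def InfZero {ι : Type*} (e : ι → L0R Ω μ) : Prop :=
  (∀ i, 0 ≤ e i) ∧ ∀ g : L0R Ω μ, (∀ i, g ≤ e i) → g ≤ 0

/-- `(o)`-convergence of a net in `L⁰ℝ`. -/
def OConv {ι : Type*} [Preorder ι] (f : ι → L0R Ω μ) (l : L0R Ω μ) : Prop :=
  ∃ e : ι → L0R Ω μ, Antitone e ∧ InfZero e ∧ ∀ i, |f i - l| ≤ e i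

/-- `(o)`-summability of a family in `L⁰ℝ` (order convergence of the net of partial sums). -/
def OSummable {ι : Type*} (g : ι → L0R Ω μ) : Prop :=
  ∃ s : L0R Ω μ, OConv (fun F : Finset ι => ∑ i ∈ F, g i) s

section LNS

variable {X : Type*} [AddCommGroup X]

/-- An `L⁰`-valued norm making `X` a lattice-normed space over `L⁰` (complex vector space case). -/
structure LNSNorm (Ω : Type) [MeasurableSpace Ω] (μ : Measure Ω)
    (X : Type*) [AddCommGroup X] [Module ℂ X] where
  nrm : X → L0R Ω μ
  nrm_nonneg : ∀ x, 0 ≤ nrm x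
  nrm_eq_zero : ∀ x, nrm x = 0 ↔ x = 0
  nrm_smul : ∀ (c : ℂ) (x : X), nrm (c • x) = ‖c‖ • nrm x
  nrm_triangle : ∀ x y, nrm (x + y) ≤ nrm x + nrm y

variable [Module ℂ X]

/-- `d`-decomposability (Kantorovich norm). -/
def LNSNorm.DDecomp (N : LNSNorm Ω μ X) : Prop :=
  ∀ (x : X) (e₁ e₂ : L0R Ω μ), 0 ≤ e₁ → 0 ≤ e₂ → e₁ ⊓ e₂ = 0 → N.nrm x = e₁ + e₂ →
    ∃ x₁ x₂ : X, x = x₁ + x₂ ∧ N.nrm x₁ = e₁ ∧ N.nrm x₂ = e₂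

/-- `(bo)`-convergence of a net in `X`. -/
def LNSNorm.BOConv (N : LNSNorm Ω μ X) {ι : Type*} [Preorder ι] (f : ι → X) (l : X) : Prop :=
  OConv (fun i => N.nrm (f i - l)) 0

/-- `(bo)`-Cauchy nets. -/
def LNSNorm.BOCauchy (N : LNSNorm Ω μ X) {ι : Type*} [Preorder ι] (f : ι → X) : Prop :=
  ∃ e : ι → L0R Ω μ, Antitone e ∧ InfZero e ∧
    ∀ i j k, k ≤ i → k ≤ j → N.nrm (f i - f j) ≤ e k

/-- `(bo)`-completeness. -/
def LNSNorm.BOComplete (N : LNSNorm Ω μ X) : Prop :=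
  ∀ (ι : Type) (_ : Nonempty ι) (_ : SemilatticeSup ι) (f : ι → X),
    N.BOCauchy f → ∃ l : X, N.BOConv f l

end LNS

section Norms
variable {X : Type*} [AddCommGroup X]
def DDecompN (nrm : X → L0R Ω μ) : Prop :=
  ∀ (x : X) (e₁ e₂ : L0R Ω μ), 0 ≤ e₁ → 0 ≤ e₂ → e₁ ⊓ e₂ = 0 → nrm x = e₁ + e₂ →
    ∃ x₁ x₂ : X, x = x₁ + x₂ ∧ nrm x₁ = e₁ ∧ nrm x₂ = e₂
def BOConvN (nrm : X → L0R Ω μ) {ι : Type*} [Preorder ι] (f : ι → X) (l : X) : Prop :=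
  OConv (fun i => nrm (f i - l)) 0
def BOCauchyN (nrm : X → L0R Ω μ) {ι : Type*} [Preorder ι] (f : ι → X) : Prop :=
  ∃ e : ι → L0R Ω μ, Antitone e ∧ InfZero e ∧
    ∀ i j k, k ≤ i → k ≤ j → nrm (f i - f j) ≤ e k
def BOCompleteN (nrm : X → L0R Ω μ) : Prop :=
  ∀ (ι : Type) (_ : Nonempty ι) (_ : SemilatticeSup ι) (f : ι → X),
    BOCauchyN nrm f → ∃ l : X, BOConvN nrm f l
def BODenseN (nrm : X → L0R Ω μ) (D : Set X) : Prop :=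
  ∀ x : X, ∃ (ι : Type) (_ : Nonempty ι) (_ : SemilatticeSup ι) (f : ι → X),
    (∀ i, f i ∈ D) ∧ BOConvN nrm f x
end Norms

/-- An `L⁰`-valued inner product on an `L⁰`-module. -/
structure KHInner (Ω : Type) [MeasurableSpace Ω] (μ : Measure Ω)
    (X : Type*) [AddCommGroup X] [Module (L0 Ω μ) X] where
  inner : X → X → L0 Ω μ
  add_left : ∀ x y z, inner (x + y) z = inner x z + inner y z
  smul_left : ∀ (c : L0 Ω μ) (x y : X), inner (c • x) y = c * inner x y
  conj_symm : ∀ x y, inner x y = conjL (inner y x)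
  self_real : ∀ x, inner x x = ofRealL (reL (inner x x))
  self_nonneg : ∀ x, 0 ≤ reL (inner x x)
  definite : ∀ x, inner x x = 0 → x = 0

section KH
variable {X : Type*} [AddCommGroup X] [Module (L0 Ω μ) X]
noncomputable def KHInner.knorm (K : KHInner Ω μ X) (x : X) : L0R Ω μ :=
  sqrtL (reL (K.inner x x))
/-- `X` is a Kaplansky-Hilbert module: the induced norm is d-decomposable and (bo)-complete. -/
def KHInner.IsKH (K : KHInner Ω μ X) : Prop := DDecompN K.knorm ∧ BOCompleteN K.knorm

variable (K : KHInner Ω μ X) (D : Submodule (L0 Ω μ) X)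
/-- operators with domain `D` mapping into `D`. -/
def MapsD (a : D →ₗ[L0 Ω μ] X) : Prop := ∀ φ : D, a φ ∈ D
def IsAdjAt (a : D →ₗ[L0 Ω μ] X) (ψ χ : X) : Prop :=
  ∀ φ : D, K.inner (a φ) ψ = K.inner (φ : X) χ
def AdjDomain (a : D →ₗ[L0 Ω μ] X) : Set X := {ψ | ∃ χ, IsAdjAt K D a ψ χ}
/-- `L⁺(D)`. -/
def LPlus : Set (D →ₗ[L0 Ω μ] X) :=
  {a | MapsD D a ∧ (D : Set X) ⊆ AdjDomain K D a ∧
       ∀ ψ ∈ D, ∃ χ ∈ D, IsAdjAt K D a ψ χ}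
def BOClosableOp (a : D →ₗ[L0 Ω μ] X) : Prop :=
  ∀ (ι : Type) (_ : Nonempty ι) (_ : SemilatticeSup ι) (f : ι → D) (y : X),
    BOConvN K.knorm (fun i => (f i : X)) 0 → BOConvN K.knorm (fun i => a (f i)) y → y = 0
/-- composition `a ∘ b` of operators on `D`, when `b` maps into `D`. -/
noncomputable def compD (a b : D →ₗ[L0 Ω μ] X) (hb : MapsD D b) : D →ₗ[L0 Ω μ] X :=
  a.comp (LinearMap.codRestrict D b hb)

/-- endomorphism version: an operator on `D` having an adjoint with domain `⊇ D` and values in `D`. -/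
def HasAdjE (a : Module.End (L0 Ω μ) D) : Prop :=
  ∀ ψ : D, ∃ χ : D, ∀ φ : D, K.inner (a φ : X) (ψ : X) = K.inner (φ : X) (χ : X)
/-- `L⁺(D)` realized inside `End(D)`. -/
def LPlusE : Set (Module.End (L0 Ω μ) D) := {a | HasAdjE K D a}
def IsAdjPairE (a b : Module.End (L0 Ω μ) D) : Prop :=
  ∀ φ ψ : D, K.inner (a φ : X) (ψ : X) = K.inner (φ : X) (b ψ : X)
/-- the rank one operator `φ ⊗ ψ` on `D`. -/
noncomputable def rankOneE (φ ψ : D) : Module.End (L0 Ω μ) D where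
  toFun η := K.inner (η : X) (ψ : X) • φ
  map_add' a b := by
    show K.inner (↑(a + b)) _ • φ = _
    rw [Submodule.coe_add, K.add_left]
    exact add_smul _ _ φ
  map_smul' c a := by
    show K.inner (↑(c • a)) _ • φ = _
    rw [Submodule.coe_smul, K.smul_left, RingHom.id_apply]
    exact mul_smul c _ φ
end KH

section Ops
variable {M : Type*} [AddCommGroup M] [Module (L0 Ω μ) M]
/-- finite-generated operator: its range is a finite-generated submodule. -/
def FinGenOp (a : Module.End (L0 Ω μ) M) : Prop :=
  ∃ (n : ℕ) (g : Fin n → M), ∀ x : M, ∃ c : Fin n → L0 Ω μ, a x = ∑ i, c i • g i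
def IsSubalgebraSet (U : Set (Module.End (L0 Ω μ) M)) : Prop :=
  (∀ a ∈ U, ∀ b ∈ U, a + b ∈ U) ∧ (∀ (c : L0 Ω μ), ∀ a ∈ U, c • a ∈ U) ∧
    (∀ a ∈ U, ∀ b ∈ U, a * b ∈ U)
/-- standard algebras of operators: subalgebras containing all finite-generated operators. -/
def IsStandard (U : Set (Module.End (L0 Ω μ) M)) : Prop :=
  IsSubalgebraSet U ∧ ∀ a, FinGenOp a → a ∈ U
/-- the operator `a` is homogeneous of type one: `d(π ⬝ a(M)) = 1` for every nonzero idempotent. -/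
def HomogOneOp (a : Module.End (L0 Ω μ) M) : Prop :=
  ∀ π : L0 Ω μ, IsIdem π → π ≠ 0 →
    (∃ g ∈ Set.range a, ∀ x ∈ Set.range a, ∃ c : L0 Ω μ, π • x = c • (π • g)) ∧
    ∃ x ∈ Set.range a, π • x ≠ 0
end Ops

section DirectSum
variable {I : Type} [DecidableEq I] {X : I → Type*}
  [∀ i, AddCommGroup (X i)] [∀ i, Module (L0 Ω μ) (X i)]
  (K : ∀ i, KHInner Ω μ (X i)) (D : ∀ i, Submodule (L0 Ω μ) (X i))

/-- `D_I`: the submodule of the direct sum consisting of finitely supported tuples. -/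
abbrev DI (D : ∀ i, Submodule (L0 Ω μ) (X i)) := Π₀ i, ↥(D i)

/-- the inner product of `X_I` restricted to `D_I`. -/
noncomputable def innerDI (φ ψ : DI D) : L0 Ω μ :=
  letI : ∀ (i : I) (x : ↥(D i)), Decidable (x ≠ 0) := fun _ x => Classical.dec _
  φ.sum fun i x => (K i).inner (x : X i) ((ψ i : X i))

/-- the canonical copy of an operator on `D i` acting on `D_I`. -/
noncomputable def coordOp (i : I) (b : Module.End (L0 Ω μ) ↥(D i)) :
    Module.End (L0 Ω μ) (DI D) :=
  (DFinsupp.lsingle (R := L0 Ω μ) i).comp (b.comp (DFinsupp.lapply (R := L0 Ω μ) i))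

/-- the canonical copy of the rank one operator `φ ⊗ φ`, `φ ∈ D i`, on `D_I`. -/
noncomputable def coordRankOne (i : I) (φ : ↥(D i)) : Module.End (L0 Ω μ) (DI D) :=
  coordOp D i (rankOneE (K i) (D i) φ φ)

/-- coordinatewise operators `(a_i)` with each `a_i ∈ L⁺(D_i)`: the algebra `L⁺(D_i : i ∈ I)`. -/
def CoordLPlus : Set (Module.End (L0 Ω μ) (DI D)) :=
  {a | ∃ f : ∀ i, Module.End (L0 Ω μ) ↥(D i),
    (∀ i, HasAdjE (K i) (D i) (f i)) ∧ ∀ (φ : DI D) (i : I), a φ i = f i (φ i)}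

/-- adjoint pairs on `D_I`. -/
def IsAdjPairDI (a b : Module.End (L0 Ω μ) (DI D)) : Prop :=
  ∀ φ ψ : DI D, innerDI K D (a φ) ψ = innerDI K D φ (b ψ)

/-- the maximal `O*`-algebra `L⁺(D_I)`. -/
def LPlusDI : Set (Module.End (L0 Ω μ) (DI D)) :=
  {a | ∃ b, IsAdjPairDI K D a b}

/-- `*`-subalgebras of operators on `D_I`. -/
def IsStarSubalgDI (A : Set (Module.End (L0 Ω μ) (DI D))) : Prop :=
  IsSubalgebraSet A ∧ ∀ a ∈ A, ∃ b ∈ A, IsAdjPairDI K D a b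

/-- projections on `D_I`: idempotent and self-adjoint. -/
def IsProjDI (p : Module.End (L0 Ω μ) (DI D)) : Prop :=
  p * p = p ∧ IsAdjPairDI K D p p

/-- the range of `p` is concentrated on a single coordinate. -/
def SingleCoordRange (p : Module.End (L0 Ω μ) (DI D)) : Prop :=
  ∃ i : I, ∀ (φ : DI D) (j : I), j ≠ i → p φ j = 0

/-- `M(A)`: rank one projections in `A` whose range generators have a unique
nonzero coordinate. -/
def MSet (A : Set (Module.End (L0 Ω μ) (DI D))) :
    Set (Module.End (L0 Ω μ) (DI D)) :=
  {p | p ∈ A ∧ IsProjDI K D p ∧ HomogOneOp p ∧ SingleCoordRange D p}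

end DirectSum
/-- A Banach–Kantorovich space over `L⁰` with its `L⁰`-module structure. -/
structure BKSpace (Ω : Type) [MeasurableSpace Ω] (μ : Measure Ω)
    (X : Type*) [AddCommGroup X] [Module (L0 Ω μ) X] where
  nrm : X → L0R Ω μ
  nrm_nonneg : ∀ x, 0 ≤ nrm x
  nrm_eq_zero : ∀ x, nrm x = 0 ↔ x = 0
  nrm_smul : ∀ (c : L0 Ω μ) (x : X), nrm (c • x) = absL c * nrm x
  nrm_triangle : ∀ x y, nrm (x + y) ≤ nrm x + nrm y
  ddecomp : DDecompN nrm
  complete : BOCompleteN nrm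



section Helpers

variable {Ω : Type} [MeasurableSpace Ω] {μ : Measure Ω}

/-- pointwise support indicator function on ℝ. -/
noncomputable def suppFun (t : ℝ) : ℝ := if t = 0 then 0 else 1
/-- pointwise inverse square root (pseudo-inverse). -/
noncomputable def sinvFun (t : ℝ) : ℝ := if t = 0 then 0 else (Real.sqrt t)⁻¹

lemma measurable_suppFun : Measurable suppFun :=
  Measurable.ite (measurableSet_singleton 0) measurable_const measurable_const

lemma measurable_sinvFun : Measurable sinvFun :=
  Measurable.ite (measurableSet_singleton 0) measurable_const
    Real.continuous_sqrt.measurable.inv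

/-- support idempotent of a real `L⁰` element, inside complex `L⁰`. -/
noncomputable def suppCL (h : L0R Ω μ) : L0 Ω μ :=
  ofRealL (AEEqFun.compMeasurable suppFun measurable_suppFun h)
/-- complex pseudo-inverse of the square root of a real `L⁰` element. -/
noncomputable def sinvCL (h : L0R Ω μ) : L0 Ω μ :=
  ofRealL (AEEqFun.compMeasurable sinvFun measurable_sinvFun h)

lemma ofRealL_ae (r : L0R Ω μ) : ofRealL r =ᵐ[μ] fun ω => (r ω : ℂ) :=
  AEEqFun.coeFn_comp _ _ r

lemma conjL_ae (c : L0 Ω μ) : conjL c =ᵐ[μ] fun ω => (starRingEnd ℂ) (c ω) :=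
  AEEqFun.coeFn_comp _ _ c

lemma reL_ae (c : L0 Ω μ) : reL c =ᵐ[μ] fun ω => (c ω).re :=
  AEEqFun.coeFn_comp _ _ c

lemma sqrtL_ae (r : L0R Ω μ) : sqrtL r =ᵐ[μ] fun ω => Real.sqrt (r ω) :=
  AEEqFun.coeFn_comp _ _ r

lemma suppCL_ae (h : L0R Ω μ) : suppCL h =ᵐ[μ] fun ω => (suppFun (h ω) : ℂ) := by
  filter_upwards [ofRealL_ae (AEEqFun.compMeasurable suppFun measurable_suppFun h),
    AEEqFun.coeFn_compMeasurable suppFun measurable_suppFun h] with ω h1 h2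
  rw [suppCL, h1, h2]; rfl

lemma sinvCL_ae (h : L0R Ω μ) : sinvCL h =ᵐ[μ] fun ω => (sinvFun (h ω) : ℂ) := by
  filter_upwards [ofRealL_ae (AEEqFun.compMeasurable sinvFun measurable_sinvFun h),
    AEEqFun.coeFn_compMeasurable sinvFun measurable_sinvFun h] with ω h1 h2
  rw [sinvCL, h1, h2]; rfl

lemma nonneg_ae {h : L0R Ω μ} (h0 : 0 ≤ h) : ∀ᵐ ω ∂μ, 0 ≤ h ω := by
  filter_upwards [AEEqFun.coeFn_le.mpr h0, AEEqFun.coeFn_zero (β := ℝ) (μ := μ)] with ω h1 h2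
  simpa [h2] using h1

/-- L1 : the support is idempotent -/
lemma suppCL_idem (h : L0R Ω μ) : suppCL h * suppCL h = suppCL h := by
  apply AEEqFun.ext
  filter_upwards [AEEqFun.coeFn_mul (suppCL h) (suppCL h), suppCL_ae h] with ω e1 e2
  rw [e1]; simp only [Pi.mul_apply, e2, suppFun]
  split <;> simp

/-- L2 : annihilating `h` annihilates its support -/
lemma mul_suppCL_eq_zero {h : L0R Ω μ} {c : L0 Ω μ} (hc : c * ofRealL h = 0) :
    c * suppCL h = 0 := by
  apply AEEqFun.ext
  filter_upwards [AEEqFun.coeFn_mul c (ofRealL h), AEEqFun.coeFn_mul c (suppCL h),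
    ofRealL_ae h, suppCL_ae h, AEEqFun.coeFn_zero (β := ℂ) (μ := μ),
    hc ▸ (AEEqFun.coeFn_mul c (ofRealL h)).symm] with ω e1 e2 e3 e4 e5 e6
  rw [e2, e5]; simp only [Pi.mul_apply, e4, Pi.zero_apply]
  have h6 : c ω * (ofRealL h) ω = 0 := by
    simp only [Pi.mul_apply] at e6; exact e6.trans e5
  rw [e3] at h6
  by_cases hz : h ω = 0
  · simp [suppFun, hz]
  · simp only [suppFun, if_neg hz, Complex.ofReal_one, mul_one]
    have : (h ω : ℂ) ≠ 0 := by exact_mod_cast hz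
    exact (mul_eq_zero.mp h6).resolve_right this

/-- L3 : `sinv` is supported on the support -/
lemma sinvCL_mul_one_sub_supp (h : L0R Ω μ) : sinvCL h * (1 - suppCL h) = 0 := by
  apply AEEqFun.ext
  filter_upwards [AEEqFun.coeFn_mul (sinvCL h) (1 - suppCL h),
    AEEqFun.coeFn_sub (1 : L0 Ω μ) (suppCL h), AEEqFun.coeFn_one (β := ℂ) (μ := μ),
    sinvCL_ae h, suppCL_ae h, AEEqFun.coeFn_zero (β := ℂ) (μ := μ)] with ω e1 e2 e3 e4 e5 e6
  rw [e1, e6]; simp only [Pi.mul_apply, Pi.zero_apply, e2, Pi.sub_apply, e3, Pi.one_apply, e4, e5]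
  by_cases hz : h ω = 0 <;> simp [suppFun, sinvFun, hz]

/-- L4 : `sinv² · h = supp` for nonnegative `h` -/
lemma sinvCL_sq_mul (h : L0R Ω μ) (h0 : 0 ≤ h) :
    sinvCL h * sinvCL h * ofRealL h = suppCL h := by
  apply AEEqFun.ext
  filter_upwards [AEEqFun.coeFn_mul (sinvCL h * sinvCL h) (ofRealL h),
    AEEqFun.coeFn_mul (sinvCL h) (sinvCL h), sinvCL_ae h, suppCL_ae h,
    ofRealL_ae h, nonneg_ae h0] with ω e1 e2 e3 e4 e5 e6
  rw [e1]; simp only [Pi.mul_apply, e2, e3, e4, e5]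
  by_cases hz : h ω = 0
  · simp [suppFun, sinvFun, hz]
  · simp only [suppFun, sinvFun, if_neg hz, Complex.ofReal_one, Complex.ofReal_inv]
    have hpos : 0 < h ω := lt_of_le_of_ne e6 (Ne.symm hz)
    have hs : Real.sqrt (h ω) ≠ 0 := by positivity
    have hch : (h ω : ℂ) ≠ 0 := by exact_mod_cast hz
    rw [← mul_inv, ← Complex.ofReal_mul, Real.mul_self_sqrt e6]
    exact inv_mul_cancel₀ hch

/-- L5 : `(1 - supp)² h = 0` -/
lemma one_sub_supp_sq_mul (h : L0R Ω μ) :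
    (1 - suppCL h) * (1 - suppCL h) * ofRealL h = 0 := by
  apply AEEqFun.ext
  filter_upwards [AEEqFun.coeFn_mul ((1 - suppCL h) * (1 - suppCL h)) (ofRealL h),
    AEEqFun.coeFn_mul (1 - suppCL h) (1 - suppCL h),
    AEEqFun.coeFn_sub (1 : L0 Ω μ) (suppCL h), AEEqFun.coeFn_one (β := ℂ) (μ := μ),
    suppCL_ae h, ofRealL_ae h, AEEqFun.coeFn_zero (β := ℂ) (μ := μ)] with ω e1 e2 e3 e4 e5 e6 e7
  rw [e1, e7]
  simp only [Pi.mul_apply, e2, e3, Pi.sub_apply, e4, Pi.one_apply, e5, e6, Pi.zero_apply]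
  by_cases hz : h ω = 0 <;> simp [suppFun, hz]

/-- L7 : an element annihilated by the support, squared against `h`, vanishes. -/
lemma mul_conj_mul_eq_zero {h : L0R Ω μ} {e : L0 Ω μ} (he : suppCL h * e = 0) :
    e * conjL e * ofRealL h = 0 := by
  apply AEEqFun.ext
  filter_upwards [AEEqFun.coeFn_mul (e * conjL e) (ofRealL h),
    AEEqFun.coeFn_mul e (conjL e), conjL_ae e, suppCL_ae h, ofRealL_ae h,
    AEEqFun.coeFn_zero (β := ℂ) (μ := μ),
    he ▸ (AEEqFun.coeFn_mul (suppCL h) e).symm] with ω e1 e2 e3 e4 e5 e6 e7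
  rw [e1, e6]
  simp only [Pi.mul_apply, e2, e3, e5, Pi.zero_apply]
  have h7 : suppCL h ω * e ω = 0 := by
    simp only [Pi.mul_apply] at e7; exact e7.trans e6
  rw [e4] at h7
  by_cases hz : h ω = 0
  · simp [hz]
  · simp only [suppFun, if_neg hz, Complex.ofReal_one, one_mul] at h7
    simp [h7]

/-- conjugation fixes real elements -/
lemma conjL_ofRealL (r : L0R Ω μ) : conjL (ofRealL r) = ofRealL r := by
  apply AEEqFun.ext
  filter_upwards [conjL_ae (ofRealL r), ofRealL_ae r] with ω e1 e2
  rw [e1, e2]; simp [Complex.conj_ofReal]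

end Helpers

section Helpers2

variable {Ω : Type} [MeasurableSpace Ω] {μ : Measure Ω}

lemma conjL_mul (c d : L0 Ω μ) : conjL (c * d) = conjL c * conjL d := by
  apply AEEqFun.ext
  filter_upwards [conjL_ae (c * d), AEEqFun.coeFn_mul c d,
    AEEqFun.coeFn_mul (conjL c) (conjL d), conjL_ae c, conjL_ae d] with ω e1 e2 e3 e4 e5
  rw [e1, e2, e3]; simp [e4, e5]

lemma conjL_add (c d : L0 Ω μ) : conjL (c + d) = conjL c + conjL d := by
  apply AEEqFun.ext
  filter_upwards [conjL_ae (c + d), AEEqFun.coeFn_add c d,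
    AEEqFun.coeFn_add (conjL c) (conjL d), conjL_ae c, conjL_ae d] with ω e1 e2 e3 e4 e5
  rw [e1, e2, e3]; simp [e4, e5]

lemma conjL_zero : conjL (0 : L0 Ω μ) = 0 := by
  apply AEEqFun.ext
  filter_upwards [conjL_ae (0 : L0 Ω μ), AEEqFun.coeFn_zero (β := ℂ) (μ := μ)] with ω e1 e2
  rw [e1, e2]; simp [e2]

lemma ofRealL_one : ofRealL (1 : L0R Ω μ) = 1 := by
  apply AEEqFun.ext
  filter_upwards [ofRealL_ae (1 : L0R Ω μ), AEEqFun.coeFn_one (β := ℝ) (μ := μ),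
    AEEqFun.coeFn_one (β := ℂ) (μ := μ)] with ω e1 e2 e3
  rw [e1, e2, e3]; simp

lemma ofRealL_zero : ofRealL (0 : L0R Ω μ) = 0 := by
  apply AEEqFun.ext
  filter_upwards [ofRealL_ae (0 : L0R Ω μ), AEEqFun.coeFn_zero (β := ℝ) (μ := μ),
    AEEqFun.coeFn_zero (β := ℂ) (μ := μ)] with ω e1 e2 e3
  rw [e1, e2, e3]; simp

lemma reL_one : reL (1 : L0 Ω μ) = 1 := by
  apply AEEqFun.ext
  filter_upwards [reL_ae (1 : L0 Ω μ), AEEqFun.coeFn_one (β := ℂ) (μ := μ),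
    AEEqFun.coeFn_one (β := ℝ) (μ := μ)] with ω e1 e2 e3
  rw [e1, e2, e3]; simp

lemma sqrtL_one : sqrtL (1 : L0R Ω μ) = 1 := by
  apply AEEqFun.ext
  filter_upwards [sqrtL_ae (1 : L0R Ω μ), AEEqFun.coeFn_one (β := ℝ) (μ := μ)] with ω e1 e2
  rw [e1, e2]; simp [e2, Real.sqrt_one]

lemma sqrtL_eq_one {r : L0R Ω μ} (hr : sqrtL r = 1) : r = 1 := by
  apply AEEqFun.ext
  filter_upwards [AEEqFun.coeFn_one (β := ℝ) (μ := μ),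
    hr ▸ (sqrtL_ae r).symm] with ω e2 e3
  rw [e2]
  exact Real.sqrt_eq_one.mp (e3.trans e2)

section Inner
variable {Y : Type*} [AddCommGroup Y] [Module (L0 Ω μ) Y] (K : KHInner Ω μ Y)

lemma inner_zero_left' (y : Y) : K.inner 0 y = 0 := by
  have h := K.add_left 0 0 y
  rw [add_zero] at h
  exact (add_eq_left.mp h.symm)

lemma inner_zero_right (x : Y) : K.inner x 0 = 0 := by
  rw [K.conj_symm, inner_zero_left', conjL_zero]

lemma inner_add_right (x y z : Y) : K.inner x (y + z) = K.inner x y + K.inner x z := by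
  rw [K.conj_symm, K.add_left, conjL_add, ← K.conj_symm, ← K.conj_symm]

lemma inner_smul_right (c : L0 Ω μ) (x y : Y) :
    K.inner x (c • y) = conjL c * K.inner x y := by
  rw [K.conj_symm, K.smul_left, conjL_mul, ← K.conj_symm]

lemma inner_norm_one {x : Y} (hx : K.knorm x = 1) : K.inner x x = 1 := by
  have h1 : reL (K.inner x x) = 1 := sqrtL_eq_one hx
  rw [K.self_real, h1, ofRealL_one]

lemma knorm_eq_one {x : Y} (hx : K.inner x x = 1) : K.knorm x = 1 := by
  rw [KHInner.knorm, hx, reL_one, sqrtL_one]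

end Inner
end Helpers2

section Helpers3
variable {Ω : Type} [MeasurableSpace Ω] {μ : Measure Ω}

lemma conjL_one : conjL (1 : L0 Ω μ) = 1 := by
  apply AEEqFun.ext
  filter_upwards [conjL_ae (1 : L0 Ω μ), AEEqFun.coeFn_one (β := ℂ) (μ := μ)] with ω e1 e2
  rw [e1, e2]; simp [e2]

lemma conjL_sub (c d : L0 Ω μ) : conjL (c - d) = conjL c - conjL d := by
  apply AEEqFun.ext
  filter_upwards [conjL_ae (c - d), AEEqFun.coeFn_sub c d,
    AEEqFun.coeFn_sub (conjL c) (conjL d), conjL_ae c, conjL_ae d] with ω e1 e2 e3 e4 e5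
  rw [e1, e2, e3]; simp [e4, e5]

end Helpers3

section Coord
variable {Ω : Type} [MeasurableSpace Ω] {μ : Measure Ω}
variable {Y : Type*} [AddCommGroup Y] [Module (L0 Ω μ) Y] (K : KHInner Ω μ Y)
variable (D : Submodule (L0 Ω μ) Y)

/-- key: a scalar annihilating `⟨g,g⟩` annihilates `g`. -/
lemma smul_eq_zero_of_inner {c : L0 Ω μ} (g : ↥D)
    (hc : c * conjL c * K.inner (g : Y) (g : Y) = 0) : c • g = 0 := by
  have h1 : K.inner ((c • g : ↥D) : Y) ((c • g : ↥D) : Y) = 0 := by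
    rw [Submodule.coe_smul, K.smul_left, inner_smul_right]
    calc c * (conjL c * K.inner (g : Y) (g : Y)) = c * conjL c * K.inner (g : Y) (g : Y) :=
      (mul_assoc _ _ _).symm
    _ = 0 := hc
  have h2 : ((c • g : ↥D) : Y) = 0 := K.definite _ h1
  exact Subtype.ext h2

/-- Main per-coordinate lemma. -/
lemma coordMain (e : ↥D) (he : K.knorm (e : Y) = 1)
    (f : Module.End (L0 Ω μ) ↥D) (g : ↥D)
    (hsa : ∀ x y : ↥D, K.inner (f x : Y) (y : Y) = K.inner (x : Y) (f y : Y))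
    (hfix : f g = g)
    (hrange : ∀ x : ↥D, ∃ c : L0 Ω μ, f x = c • g) :
    ∃ φu : ↥D, K.knorm (φu : Y) = 1 ∧
      f = suppCL (reL (K.inner (g : Y) (g : Y))) • rankOneE K D φu φu := by
  set h : L0R Ω μ := reL (K.inner (g : Y) (g : Y)) with hh
  have h0 : 0 ≤ h := K.self_nonneg _
  have hgg : K.inner (g : Y) (g : Y) = ofRealL h := K.self_real _
  set π : L0 Ω μ := suppCL h with hπ
  set c₀ : L0 Ω μ := sinvCL h with hc₀
  have hπconj : conjL π = π := conjL_ofRealL _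
  have hc₀conj : conjL c₀ = c₀ := conjL_ofRealL _
  have h1πconj : conjL (1 - π) = 1 - π := by rw [conjL_sub, conjL_one, hπconj]
  have hππ : π * π = π := suppCL_idem h
  have hc₀π : c₀ * (1 - π) = 0 := sinvCL_mul_one_sub_supp h
  have hc₀π' : c₀ * π = c₀ := by
    have h' := hc₀π
    rw [mul_sub, mul_one, sub_eq_zero] at h'
    exact h'.symm
  have hsq : c₀ * c₀ * ofRealL h = π := sinvCL_sq_mul h h0
  -- (V1) : π • g = g
  have hV1 : ((1 : L0 Ω μ) - π) • g = 0 := by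
    apply smul_eq_zero_of_inner K D
    rw [h1πconj, hgg]
    exact one_sub_supp_sq_mul h
  have hπg : π • g = g := by
    have := hV1
    rw [sub_smul, one_smul, sub_eq_zero] at this
    exact this.symm
  -- inner products against g
  have hee : K.inner (e : Y) (e : Y) = 1 := inner_norm_one K he
  have hV3 : ∀ x : ↥D, ∃ c : L0 Ω μ, f x = c • g ∧
      c * ofRealL h = K.inner (x : Y) (g : Y) := by
    intro x
    obtain ⟨c, hc⟩ := hrange x
    refine ⟨c, hc, ?_⟩
    have h1 : K.inner (f x : Y) (g : Y) = K.inner (x : Y) (g : Y) := by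
      rw [hsa, hfix]
    rw [hc, Submodule.coe_smul, K.smul_left, hgg] at h1
    exact h1
  -- the unit vector
  set φu : ↥D := c₀ • g + ((1 : L0 Ω μ) - π) • e with hφu
  have hφcoe : (φu : Y) = c₀ • (g : Y) + ((1 : L0 Ω μ) - π) • (e : Y) := by
    rw [hφu]; push_cast; rfl
  -- inner expansion
  have hφφ : K.inner (φu : Y) (φu : Y) = 1 := by
    rw [hφcoe, K.add_left, K.smul_left, K.smul_left, inner_add_right, inner_smul_right,
      inner_smul_right, inner_add_right, inner_smul_right, inner_smul_right,
      hc₀conj, h1πconj, hgg, hee]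
    linear_combination hsq + (K.inner (g : Y) (e : Y) + K.inner (e : Y) (g : Y)) * hc₀π + hππ
  refine ⟨φu, knorm_eq_one K hφφ, ?_⟩
  -- f = π • (φu ⊗ φu)
  apply LinearMap.ext
  intro x
  obtain ⟨c, hc, hch⟩ := hV3 x
  have happ : (π • rankOneE K D φu φu) x = (π * K.inner (x : Y) (φu : Y)) • φu := by
    rw [LinearMap.smul_apply]
    have : rankOneE K D φu φu x = K.inner (x : Y) (φu : Y) • φu := rfl
    rw [this, smul_smul]
  rw [happ]
  have hxφ : K.inner (x : Y) (φu : Y) =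
      c₀ * K.inner (x : Y) (g : Y) + (1 - π) * K.inner (x : Y) (e : Y) := by
    rw [hφcoe, inner_add_right, inner_smul_right, inner_smul_right, hc₀conj, h1πconj]
  have hscalar : π * K.inner (x : Y) (φu : Y) = c₀ * K.inner (x : Y) (g : Y) := by
    rw [hxφ, mul_add, ← mul_assoc, ← mul_assoc, mul_comm π c₀, hc₀π']
    have : π * (1 - π) = 0 := by rw [mul_sub, mul_one, hππ, sub_self]
    rw [this, zero_mul, add_zero]
  rw [hscalar]
  -- (c₀ ⟨x,g⟩) • φu = c • g
  have hfinal : (c₀ * K.inner (x : Y) (g : Y)) • φu = c • g := by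
    rw [hφu, smul_add, smul_smul, smul_smul]
    have h2 : c₀ * K.inner (x : Y) (g : Y) * (1 - π) = 0 := by
      rw [mul_comm c₀ (K.inner (x : Y) (g : Y)), mul_assoc, hc₀π, mul_zero]
    have h1 : c₀ * K.inner (x : Y) (g : Y) * c₀ = c * π := by
      linear_combination c * hsq - c₀ * c₀ * hch
    rw [h1, h2, zero_smul, add_zero, ← smul_smul, hπg]
  rw [hfinal, hc]

end Coord

section Glue
variable {Ω : Type} [MeasurableSpace Ω] {μ : Measure Ω}
variable {I : Type} [DecidableEq I] {X : I → Type*} [∀ i, AddCommGroup (X i)]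
  [∀ i, Module (L0 Ω μ) (X i)]

lemma innerDI_single (K : ∀ i, KHInner Ω μ (X i)) (D : ∀ i, Submodule (L0 Ω μ) (X i))
    (i : I) (u v : ↥(D i)) :
    innerDI K D (DFinsupp.single i u) (DFinsupp.single i v) = (K i).inner (u : X i) v := by
  letI : ∀ (i : I) (x : ↥(D i)), Decidable (x ≠ 0) := fun _ x => Classical.dec _
  unfold innerDI
  rw [DFinsupp.sum_single_index, DFinsupp.single_eq_same]
  rw [ZeroMemClass.coe_zero]
  exact inner_zero_left' (K i) _

end Glue

/-- Every homogeneous-of-type-one `L⁰`-linear projection in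
`L⁺(D_i : i ∈ I)` is of the form `(o)-∑_{i∈I} π_i (φ_i ⊗ φ_i)` for a partition
`(π_i)` of the unit in `∇` and unit vectors `φ_i ∈ D_i`. -/
theorem statement12 {I : Type} [DecidableEq I] {X : I → Type*} [∀ i, AddCommGroup (X i)]
    [∀ i, Module (L0 Ω μ) (X i)] (K : ∀ i, KHInner Ω μ (X i)) (hK : ∀ i, (K i).IsKH)
    (D : ∀ i, Submodule (L0 Ω μ) (X i))
    (hdense : ∀ i, BODenseN (K i).knorm ((D i) : Set (X i)))
    (hunit : ∀ i, ∃ e : ↥(D i), (K i).knorm (e : X i) = 1)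
    (a : Module.End (L0 Ω μ) (DI D)) (f : ∀ i, Module.End (L0 Ω μ) ↥(D i))
    (hadj : ∀ i, HasAdjE (K i) (D i) (f i))
    (hcoord : ∀ (φ : DI D) (i : I), a φ i = f i (φ i))
    (hproj : IsProjDI K D a) (hone : HomogOneOp a) :
    ∃ (πp : I → L0 Ω μ) (φu : ∀ i, ↥(D i)),
      IsPartition πp ∧ (∀ i, (K i).knorm (φu i : X i) = 1) ∧
      ∀ i, f i = πp i • rankOneE (K i) (D i) (φu i) (φu i) := by
  by_cases htriv : (1 : L0 Ω μ) = 0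
  · -- trivial case : `L⁰ = 0`
    have hae : ∀ᵐ ω ∂μ, False := by
      have h10 : ⇑(1 : L0 Ω μ) =ᵐ[μ] ⇑(0 : L0 Ω μ) := by rw [htriv]
      filter_upwards [h10, AEEqFun.coeFn_one (β := ℂ) (μ := μ),
        AEEqFun.coeFn_zero (β := ℂ) (μ := μ)] with ω hA hB hC
      exact one_ne_zero (hB.symm.trans (hA.trans hC) : (1 : ℂ) = 0)
    have hL0sub : ∀ u v : L0 Ω μ, u = v := fun u v =>
      AEEqFun.ext (hae.mono fun ω h => h.elim)
    have hDzero : ∀ (i : I) (x : ↥(D i)), x = 0 := by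
      intro i x
      calc x = (1 : L0 Ω μ) • x := (one_smul _ x).symm
      _ = (0 : L0 Ω μ) • x := by rw [htriv]
      _ = 0 := zero_smul _ x
    refine ⟨fun _ => 0, fun i => (hunit i).choose, ⟨fun i => mul_zero 0,
      fun i j _ => mul_zero 0, fun e _ _ => hL0sub e 0⟩,
      fun i => (hunit i).choose_spec, fun i => ?_⟩
    apply LinearMap.ext
    intro x
    exact (hDzero i _).trans (hDzero i _).symm
  · -- nontrivial case
    have hIdem1 : IsIdem (1 : L0 Ω μ) := mul_one 1
    obtain ⟨hcyc, -⟩ := hone 1 hIdem1 htriv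
    obtain ⟨g, hgmem, hcyc⟩ := hcyc
    simp only [one_smul] at hcyc
    have hag : a g = g := by
      obtain ⟨ψ, rfl⟩ := hgmem
      have := LinearMap.ext_iff.mp hproj.1 ψ
      rwa [Module.End.mul_apply] at this
    -- single-coordinate action
    have hsingle : ∀ (i : I) (x : ↥(D i)),
        a (DFinsupp.single i x) = DFinsupp.single i (f i x) := by
      intro i x
      apply DFinsupp.ext
      intro j
      rw [hcoord]
      by_cases hj : j = i
      · subst hj; rw [DFinsupp.single_eq_same, DFinsupp.single_eq_same]
      · rw [DFinsupp.single_eq_of_ne hj,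
          DFinsupp.single_eq_of_ne hj, map_zero]
    -- coordinatewise facts
    have hfix : ∀ i : I, f i (g i) = g i := by
      intro i
      rw [← hcoord, hag]
    have hrange : ∀ (i : I) (x : ↥(D i)), ∃ c : L0 Ω μ, f i x = c • g i := by
      intro i x
      obtain ⟨c, hc⟩ := hcyc (a (DFinsupp.single i x)) ⟨DFinsupp.single i x, rfl⟩
      refine ⟨c, ?_⟩
      have h1 := congrArg (fun φ : DI D => φ i) hc
      rw [hcoord, DFinsupp.single_eq_same, DFinsupp.smul_apply] at h1
      exact h1
    have hsa : ∀ (i : I) (x y : ↥(D i)),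
        (K i).inner (f i x : X i) (y : X i) = (K i).inner (x : X i) (f i y : X i) := by
      intro i x y
      have h1 := hproj.2 (DFinsupp.single i x) (DFinsupp.single i y)
      rwa [hsingle, hsingle, innerDI_single, innerDI_single] at h1
    -- apply the per-coordinate lemma
    have main := fun i : I => coordMain (K i) (D i) (hunit i).choose (hunit i).choose_spec
      (f i) (g i) (hsa i) (hfix i) (hrange i)
    choose φu hφ1 hφ2 using main
    set πp : I → L0 Ω μ :=
      fun i => suppCL (reL ((K i).inner (g i : X i) (g i : X i))) with hπp
    refine ⟨πp, φu, ⟨fun i => suppCL_idem _, ?_, ?_⟩, hφ1, hφ2⟩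
    · -- disjointness
      intro i j hij
      have h1 : a (DFinsupp.single i (g i)) = DFinsupp.single i (g i) := by
        rw [hsingle, hfix]
      obtain ⟨c, hc⟩ := hcyc (DFinsupp.single i (g i)) ⟨DFinsupp.single i (g i), h1⟩
      -- coordinate j
      have hcJ : c * πp j = 0 := by
        have h2 := congrArg (fun φ : DI D => φ j) hc
        rw [DFinsupp.single_eq_of_ne (Ne.symm hij), DFinsupp.smul_apply] at h2
        have h3 : (K j).inner ((c • g j : ↥(D j)) : X j) (g j : X j) = 0 := by
          rw [← h2, ZeroMemClass.coe_zero]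
          exact inner_zero_left' (K j) _
        rw [Submodule.coe_smul, (K j).smul_left, (K j).self_real] at h3
        exact mul_suppCL_eq_zero h3
      -- coordinate i
      have hcI : c * πp i = πp i := by
        have h2 := congrArg (fun φ : DI D => φ i) hc
        rw [DFinsupp.single_eq_same, DFinsupp.smul_apply] at h2
        have h4 : ((c - 1) • g i : ↥(D i)) = 0 := by
          rw [sub_smul, one_smul, ← h2, sub_self]
        have h3 : (K i).inner (((c - 1) • g i : ↥(D i)) : X i) (g i : X i) = 0 := by
          rw [h4, ZeroMemClass.coe_zero]
          exact inner_zero_left' (K i) _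
        rw [Submodule.coe_smul, (K i).smul_left, (K i).self_real] at h3
        have h5 := mul_suppCL_eq_zero h3
        rw [sub_mul, one_mul, sub_eq_zero] at h5
        exact h5
      linear_combination πp i * hcJ - πp j * hcI
    · -- maximality
      intro e heIdem horth
      by_contra hne
      obtain ⟨x, hx, hex⟩ := (hone e heIdem hne).2
      obtain ⟨ψ, rfl⟩ := hx
      apply hex
      apply DFinsupp.ext
      intro j
      rw [DFinsupp.smul_apply, hcoord]
      obtain ⟨c, hc⟩ := hrange j (ψ j)
      rw [hc, smul_smul]
      have hgj : e • g j = 0 := by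
        apply smul_eq_zero_of_inner (K j) (D j)
        rw [(K j).self_real]
        exact mul_conj_mul_eq_zero (horth j)
      calc (e * c) • g j = (c * e) • g j := by rw [mul_comm]
      _ = c • (e • g j) := (smul_smul c e (g j)).symm
      _ = 0 := by rw [hgj, smul_zero]

end KHPaper
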